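/- arXiv:2103.03571 — 3 statements merged into one kernel-verified Lean document; each statement's English description precedes it below -/
import Mathlib

section
/- Confidence controls the robustness probability: under the conditions above, if μ is a probability distribution over X and every coordinate of f is L_f-Lipschitz with 2·L_f·ξ < 1, then μ({x : ∃ x' with d(x,x') ≤ ξ and f̃(x') ≠ f̃(x)}) ≤ (1 − E_{x∼μ}[M(f(x))]) / (1 − 2·L_f·ξ). -/
open MeasureTheory

/-- Confidence controls the robustness probability: if every coordinate of `f`
is `L`-Lipschitz with `2·L·ξ < 1`, `F` selects an argmax prediction and `M` is
the margin (largest minus second-largest score, in `[0,1]`), then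
`μ({x : ∃ x', d(x,x') ≤ ξ ∧ F x' ≠ F x}) ≤ (1 − E_μ[M]) / (1 − 2·L·ξ)`. -/
theorem confidence_controls_robustness {X : Type*} [MetricSpace X]
    [MeasurableSpace X] [BorelSpace X] (μ : Measure X) [IsProbabilityMeasure μ]
    {K : ℕ} (hK : 2 ≤ K) (f : X → Fin K → ℝ) (L ξ : ℝ) (hL : 0 ≤ L)
    (hξ : 0 < ξ) (hLξ : 2 * L * ξ < 1)
    (hrange : ∀ x i, f x i ∈ Set.Icc (0:ℝ) 1)
    (hlip : ∀ i x x', |f x i - f x' i| ≤ L * dist x x')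
    (F : X → Fin K) (hF : ∀ x j, f x j ≤ f x (F x)) (hFmeas : Measurable F)
    (M : X → ℝ)
    (hM : ∀ x, M x = f x (F x) - sSup ((f x) '' {j | j ≠ F x}))
    (hMint : Integrable M μ) :
    (μ {x | ∃ x', dist x x' ≤ ξ ∧ F x' ≠ F x}).toReal ≤
      (1 - ∫ x, M x ∂μ) / (1 - 2 * L * ξ) := by
  set c : ℝ := 1 - 2 * L * ξ with hc
  have hc0 : 0 < c := by simp [hc]; linarith
  -- basic facts about the sup set
  have hne : ∀ x : X, ({j | j ≠ F x} : Set (Fin K)).Nonempty := by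
    intro x
    have : ∃ j : Fin K, j ≠ F x := by
      by_contra h
      push_neg at h
      have h0 : (⟨0, by omega⟩ : Fin K) = F x := h _
      have h1 : (⟨1, by omega⟩ : Fin K) = F x := h _
      rw [← h1] at h0
      simp [Fin.ext_iff] at h0
    exact this
  have hbdd : ∀ x : X, BddAbove ((f x) '' {j | j ≠ F x}) :=
    fun x => (Set.toFinite _).bddAbove
  have hsup_le : ∀ x : X, sSup ((f x) '' {j | j ≠ F x}) ≤ f x (F x) := by
    intro x
    apply csSup_le ((hne x).image _)
    rintro r ⟨j, -, rfl⟩; exact hF x j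
  have hsup_nonneg : ∀ x : X, 0 ≤ sSup ((f x) '' {j | j ≠ F x}) := by
    intro x
    obtain ⟨j, hj⟩ := hne x
    exact le_trans (hrange x j).1 (le_csSup (hbdd x) ⟨j, hj, rfl⟩)
  have hM1 : ∀ x, M x ≤ 1 := by
    intro x; rw [hM x]
    have := (hrange x (F x)).2
    linarith [hsup_nonneg x]
  -- key robustness lemma: large margin ⇒ prediction constant on ξ-ball
  have key : ∀ x : X, (∃ x', dist x x' ≤ ξ ∧ F x' ≠ F x) → M x ≤ 2 * L * ξ := by
    intro x ⟨x', hd, hne'⟩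
    have h1 : f x' (F x) ≤ f x' (F x') := hF x' (F x)
    have h2 : f x (F x) - f x' (F x) ≤ L * ξ := by
      have := hlip (F x) x x'
      have := abs_le.mp this
      nlinarith [this.2, mul_le_mul_of_nonneg_left hd hL]
    have h3 : f x' (F x') - f x (F x') ≤ L * ξ := by
      have := abs_le.mp (hlip (F x') x' x)
      rw [dist_comm] at this
      nlinarith [this.2, mul_le_mul_of_nonneg_left hd hL]
    have h4 : f x (F x') ≤ sSup ((f x) '' {j | j ≠ F x}) :=
      le_csSup (hbdd x) ⟨F x', hne', rfl⟩
    rw [hM x]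
    linarith
  -- Markov on g = 1 - M
  have hsub : {x | ∃ x', dist x x' ≤ ξ ∧ F x' ≠ F x} ⊆ {x | c ≤ 1 - M x} := by
    intro x hx
    have := key x hx
    simp only [Set.mem_setOf_eq, hc]
    linarith
  have hgint : Integrable (fun x => 1 - M x) μ := (integrable_const 1).sub hMint
  have hgnn : 0 ≤ᵐ[μ] fun x => 1 - M x :=
    Filter.Eventually.of_forall (fun x => by simp only [Pi.zero_apply]; linarith [hM1 x])
  have markov := mul_meas_ge_le_integral_of_nonneg hgnn hgint c
  have hint : ∫ x, (1 - M x) ∂μ = 1 - ∫ x, M x ∂μ := by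
    rw [integral_sub (integrable_const 1) hMint]
    simp
  have hmono : (μ {x | ∃ x', dist x x' ≤ ξ ∧ F x' ≠ F x}).toReal ≤
      (μ {x | c ≤ 1 - M x}).toReal := by
    apply ENNReal.toReal_mono (measure_ne_top μ _) (measure_mono hsub)
  have : c * (μ {x | ∃ x', dist x x' ≤ ξ ∧ F x' ≠ F x}).toReal ≤ 1 - ∫ x, M x ∂μ := by
    calc c * (μ {x | ∃ x', dist x x' ≤ ξ ∧ F x' ≠ F x}).toReal
        ≤ c * (μ {x | c ≤ 1 - M x}).toReal := by
          exact mul_le_mul_of_nonneg_left hmono hc0.le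
      _ ≤ ∫ x, (1 - M x) ∂μ := markov
      _ = 1 - ∫ x, M x ∂μ := hint
  rw [le_div_iff₀ hc0]
  linarith
end

section
/- Rademacher complexity of the pointwise maximum: for two function classes F₁, F₂ of real-valued functions on X and any sample S of size n, R̂(max(F₁,F₂)|_S) ≤ R̂(F₁|_S) + R̂(F₂|_S), where max(F₁,F₂) = {x ↦ max(f₁(x), f₂(x)) : f₁ ∈ F₁, f₂ ∈ F₂}. -/
open Finset

/-- Empirical Rademacher complexity of a class `F` of real-valued functions on
the sample `x : Fin n → X`. -/
noncomputable def empRad {X : Type*} (n : ℕ) (x : Fin n → X)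
    (F : Set (X → ℝ)) : ℝ :=
  (1 / n) * ((1 / 2 ^ n) * ∑ σ : Fin n → Bool,
    sSup ((fun f : X → ℝ => ∑ j, (if σ j then (1:ℝ) else -1) * f (x j)) '' F))

def eps (b : Bool) : ℝ := if b then 1 else -1

lemma eps_mul_le_abs (b : Bool) (t : ℝ) : eps b * t ≤ |t| := by
  cases b <;> simp [eps]
  · exact neg_le_abs t
  · exact le_abs_self t

lemma bdd_of_le {α : Type*} {H : Set α} {A : α → ℝ} {c : ℝ}
    (h : ∀ g ∈ H, A g ≤ c) : BddAbove (A '' H) :=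
  ⟨c, by rintro y ⟨g, hg, rfl⟩; exact h g hg⟩

lemma sSup_add_sSup_le {α : Type*} {H : Set α} (hne : H.Nonempty)
    {A B : α → ℝ} {R : ℝ}
    (h : ∀ g ∈ H, ∀ g' ∈ H, A g + B g' ≤ R) :
    sSup (A '' H) + sSup (B '' H) ≤ R := by
  have h1 : sSup (A '' H) ≤ R - sSup (B '' H) := by
    apply csSup_le (hne.image A)
    rintro y ⟨g, hg, rfl⟩
    have h2 : sSup (B '' H) ≤ R - A g := by
      apply csSup_le (hne.image B)
      rintro z ⟨g', hg', rfl⟩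
      linarith [h g hg g' hg']
    linarith
  linarith

lemma two_point {α : Type*} {H : Set α} (hne : H.Nonempty)
    (p a : α → ℝ)
    (h1 : BddAbove ((fun g => p g + a g) '' H))
    (h2 : BddAbove ((fun g => -p g + a g) '' H)) :
    sSup ((fun g => |p g| + a g) '' H) + sSup ((fun g => -|p g| + a g) '' H) ≤
      sSup ((fun g => p g + a g) '' H) + sSup ((fun g => -p g + a g) '' H) := by
  apply sSup_add_sSup_le hne
  intro g hg g' hg'
  rcases le_total (p g') (p g) with hc | hc
  · have e1 : p g + a g ≤ sSup ((fun g => p g + a g) '' H) := le_csSup h1 ⟨g, hg, rfl⟩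
    have e2 : -p g' + a g' ≤ sSup ((fun g => -p g + a g) '' H) := le_csSup h2 ⟨g', hg', rfl⟩
    have e3 : |p g| - |p g'| ≤ p g - p g' := by
      have h4 := abs_sub_abs_le_abs_sub (p g) (p g')
      have h5 : |p g - p g'| = p g - p g' := abs_of_nonneg (by linarith)
      linarith
    linarith
  · have e1 : p g' + a g' ≤ sSup ((fun g => p g + a g) '' H) := le_csSup h1 ⟨g', hg', rfl⟩
    have e2 : -p g + a g ≤ sSup ((fun g => -p g + a g) '' H) := le_csSup h2 ⟨g, hg, rfl⟩
    have e3 : |p g| - |p g'| ≤ p g' - p g := by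
      have h4 := abs_sub_abs_le_abs_sub (p g) (p g')
      have h5 : |p g - p g'| = -(p g - p g') := abs_of_nonpos (by linarith)
      linarith
    linarith

-- step lemma
lemma contraction_step {X : Type*} {n : ℕ} (x : Fin n → X) (H : Set (X → ℝ))
    (hne : H.Nonempty) (hb : ∀ h ∈ H, ∀ y, |h y| ≤ 2)
    (i : Fin n) (T : Finset (Fin n)) (hi : i ∉ T) :
    ∑ σ : Fin n → Bool,
      sSup ((fun h : X → ℝ =>
        ∑ j, eps (σ j) * (if j ∈ insert i T then |h (x j)| else h (x j))) '' H) ≤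
    ∑ σ : Fin n → Bool,
      sSup ((fun h : X → ℝ =>
        ∑ j, eps (σ j) * (if j ∈ T then |h (x j)| else h (x j))) '' H) := by
  set F' : (Fin n → Bool) → ℝ := fun σ =>
    sSup ((fun h : X → ℝ =>
      ∑ j, eps (σ j) * (if j ∈ insert i T then |h (x j)| else h (x j))) '' H) with hF'
  set F : (Fin n → Bool) → ℝ := fun σ =>
    sSup ((fun h : X → ℝ =>
      ∑ j, eps (σ j) * (if j ∈ T then |h (x j)| else h (x j))) '' H) with hF
  -- pairing identities
  have pair : ∀ (G : (Fin n → Bool) → ℝ),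
      (∑ σ : Fin n → Bool, G (Function.update σ i true)) +
        (∑ σ : Fin n → Bool, G (Function.update σ i false)) =
      2 * ∑ σ : Fin n → Bool, G σ := by
    intro G
    have inv : Function.Involutive (fun σ : Fin n → Bool => Function.update σ i (!σ i)) := by
      intro σ; funext j
      by_cases hj : j = i
      · subst hj; simp
      · simp [Function.update_of_ne hj]
    have hflip : ∑ σ : Fin n → Bool, G (Function.update σ i (!σ i)) = ∑ σ : Fin n → Bool, G σ :=
      Equiv.sum_comp (inv.toPerm _) G
    calc (∑ σ : Fin n → Bool, G (Function.update σ i true)) +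
        (∑ σ : Fin n → Bool, G (Function.update σ i false))
        = ∑ σ : Fin n → Bool, (G (Function.update σ i true) + G (Function.update σ i false)) :=
          Finset.sum_add_distrib.symm
      _ = ∑ σ : Fin n → Bool, (G (Function.update σ i (σ i)) + G (Function.update σ i (!σ i))) := by
          refine Finset.sum_congr rfl fun σ _ => ?_
          cases h : σ i <;> simp [h, add_comm]
      _ = 2 * ∑ σ : Fin n → Bool, G σ := by
          rw [Finset.sum_add_distrib, hflip]
          simp [Function.update_eq_self, two_mul]
  -- pointwise inequality per σ
  have point : ∀ σ : Fin n → Bool,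
      F' (Function.update σ i true) + F' (Function.update σ i false) ≤
      F (Function.update σ i true) + F (Function.update σ i false) := by
    intro σ
    set a : (X → ℝ) → ℝ := fun h =>
      ∑ j ∈ univ.erase i, eps (σ j) * (if j ∈ T then |h (x j)| else h (x j)) with ha
    have ha_le : ∀ h ∈ H, a h ≤ 2 * n := by
      intro h hh
      have : a h ≤ ∑ j ∈ univ.erase i, (2 : ℝ) := by
        refine Finset.sum_le_sum fun j hj => (eps_mul_le_abs _ _).trans ?_
        by_cases hT : j ∈ T <;> simp [hT, abs_abs]
        · exact hb h hh (x j)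
        · exact hb h hh (x j)
      have hcard : ((univ.erase i).card : ℝ) ≤ n := by
        have := Finset.card_erase_le (a := i) (s := (univ : Finset (Fin n)))
        have h2 : (univ : Finset (Fin n)).card = n := Finset.card_univ.trans (Fintype.card_fin n)
        exact_mod_cast le_trans this (le_of_eq h2)
      rw [Finset.sum_const, nsmul_eq_mul] at this
      nlinarith
    -- image rewriting
    have imgA : ∀ b : Bool,
        ((fun h : X → ℝ =>
          ∑ j, eps (Function.update σ i b j) * (if j ∈ insert i T then |h (x j)| else h (x j))) '' H)
        = ((fun h : X → ℝ => eps b * |h (x i)| + a h) '' H) := by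
      intro b
      refine Set.image_congr' (fun h => ?_)
      rw [← Finset.add_sum_erase _ _ (Finset.mem_univ i)]
      congr 1
      · simp [Function.update_self]
      · refine Finset.sum_congr rfl fun j hj => ?_
        have hji : j ≠ i := (Finset.mem_erase.mp hj).1
        rw [Function.update_of_ne hji]
        congr 1
        simp [Finset.mem_insert, hji]
    have imgB : ∀ b : Bool,
        ((fun h : X → ℝ =>
          ∑ j, eps (Function.update σ i b j) * (if j ∈ T then |h (x j)| else h (x j))) '' H)
        = ((fun h : X → ℝ => eps b * h (x i) + a h) '' H) := by
      intro b
      refine Set.image_congr' (fun h => ?_)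
      rw [← Finset.add_sum_erase _ _ (Finset.mem_univ i)]
      congr 1
      · simp [Function.update_self, hi]
      · refine Finset.sum_congr rfl fun j hj => ?_
        have hji : j ≠ i := (Finset.mem_erase.mp hj).1
        rw [Function.update_of_ne hji]
    have bdd1 : BddAbove ((fun h : X → ℝ => h (x i) + a h) '' H) :=
      bdd_of_le (c := 2 + 2 * n) fun h hh => by
        have := (le_abs_self (h (x i))).trans (hb h hh (x i))
        linarith [ha_le h hh]
    have bdd2 : BddAbove ((fun h : X → ℝ => -h (x i) + a h) '' H) :=
      bdd_of_le (c := 2 + 2 * n) fun h hh => by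
        have := (neg_le_abs (h (x i))).trans (hb h hh (x i))
        linarith [ha_le h hh]
    have key := two_point hne (fun h : X → ℝ => h (x i)) a bdd1 bdd2
    have e1 : F' (Function.update σ i true) = sSup ((fun h : X → ℝ => |h (x i)| + a h) '' H) := by
      show sSup ((fun h : X → ℝ =>
        ∑ j, eps (Function.update σ i true j) * (if j ∈ insert i T then |h (x j)| else h (x j))) '' H) = _
      rw [imgA true]
      congr 1
      refine Set.image_congr' (fun h => ?_)
      simp [eps]
    have e2 : F' (Function.update σ i false) = sSup ((fun h : X → ℝ => -|h (x i)| + a h) '' H) := by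
      show sSup ((fun h : X → ℝ =>
        ∑ j, eps (Function.update σ i false j) * (if j ∈ insert i T then |h (x j)| else h (x j))) '' H) = _
      rw [imgA false]
      congr 1
      refine Set.image_congr' (fun h => ?_)
      simp [eps]
    have e3 : F (Function.update σ i true) = sSup ((fun h : X → ℝ => h (x i) + a h) '' H) := by
      show sSup ((fun h : X → ℝ =>
        ∑ j, eps (Function.update σ i true j) * (if j ∈ T then |h (x j)| else h (x j))) '' H) = _
      rw [imgB true]
      congr 1
      refine Set.image_congr' (fun h => ?_)
      simp [eps]
    have e4 : F (Function.update σ i false) = sSup ((fun h : X → ℝ => -h (x i) + a h) '' H) := by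
      show sSup ((fun h : X → ℝ =>
        ∑ j, eps (Function.update σ i false j) * (if j ∈ T then |h (x j)| else h (x j))) '' H) = _
      rw [imgB false]
      congr 1
      refine Set.image_congr' (fun h => ?_)
      simp [eps]
    rw [e1, e2, e3, e4]
    exact key
  have p1 := pair F'
  have p2 := pair F
  have hsum : ∑ σ : Fin n → Bool, (F' (Function.update σ i true) + F' (Function.update σ i false))
      ≤ ∑ σ : Fin n → Bool, (F (Function.update σ i true) + F (Function.update σ i false)) :=
    Finset.sum_le_sum fun σ _ => point σ
  rw [Finset.sum_add_distrib, Finset.sum_add_distrib] at hsum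
  linarith


lemma contraction {X : Type*} {n : ℕ} (x : Fin n → X) (H : Set (X → ℝ))
    (hne : H.Nonempty) (hb : ∀ h ∈ H, ∀ y, |h y| ≤ 2) :
    ∑ σ : Fin n → Bool, sSup ((fun h : X → ℝ => ∑ j, eps (σ j) * |h (x j)|) '' H) ≤
    ∑ σ : Fin n → Bool, sSup ((fun h : X → ℝ => ∑ j, eps (σ j) * h (x j)) '' H) := by
  have key : ∀ T : Finset (Fin n),
      ∑ σ : Fin n → Bool,
        sSup ((fun h : X → ℝ => ∑ j, eps (σ j) * (if j ∈ T then |h (x j)| else h (x j))) '' H) ≤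
      ∑ σ : Fin n → Bool,
        sSup ((fun h : X → ℝ =>
          ∑ j, eps (σ j) * (if j ∈ (∅ : Finset (Fin n)) then |h (x j)| else h (x j))) '' H) := by
    intro T
    induction T using Finset.induction_on with
    | empty => exact le_refl _
    | @insert i T hi ih => exact (contraction_step x H hne hb i T hi).trans ih
  have h1 := key univ
  have e1 : ∀ σ : Fin n → Bool,
      ((fun h : X → ℝ => ∑ j, eps (σ j) * (if j ∈ (univ : Finset (Fin n)) then |h (x j)| else h (x j))) '' H)
      = ((fun h : X → ℝ => ∑ j, eps (σ j) * |h (x j)|) '' H) := by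
    intro σ; exact Set.image_congr' fun h => by simp
  have e2 : ∀ σ : Fin n → Bool,
      ((fun h : X → ℝ => ∑ j, eps (σ j) * (if j ∈ (∅ : Finset (Fin n)) then |h (x j)| else h (x j))) '' H)
      = ((fun h : X → ℝ => ∑ j, eps (σ j) * h (x j)) '' H) := by
    intro σ; exact Set.image_congr' fun h => by simp
  calc ∑ σ : Fin n → Bool, sSup ((fun h : X → ℝ => ∑ j, eps (σ j) * |h (x j)|) '' H)
      = ∑ σ : Fin n → Bool, sSup ((fun h : X → ℝ =>
          ∑ j, eps (σ j) * (if j ∈ (univ : Finset (Fin n)) then |h (x j)| else h (x j))) '' H) := by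
        exact Finset.sum_congr rfl fun σ _ => by rw [e1 σ]
    _ ≤ _ := by
        refine h1.trans (le_of_eq ?_)
        exact Finset.sum_congr rfl fun σ _ => by rw [e2 σ]

lemma bdd_sum {X : Type*} {n : ℕ} (x : Fin n → X) (G : Set (X → ℝ)) (c : ℝ)
    (hb : ∀ f ∈ G, ∀ y, |f y| ≤ c) (σ : Fin n → Bool) :
    BddAbove ((fun f : X → ℝ => ∑ j, eps (σ j) * f (x j)) '' G) :=
  bdd_of_le (c := n * c) fun f hf => by
    calc ∑ j, eps (σ j) * f (x j) ≤ ∑ _j : Fin n, c :=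
          Finset.sum_le_sum fun j _ => (eps_mul_le_abs _ _).trans (hb f hf (x j))
      _ = n * c := by simp [Finset.sum_const, nsmul_eq_mul]

lemma bdd_sum_abs {X : Type*} {n : ℕ} (x : Fin n → X) (G : Set (X → ℝ)) (c : ℝ)
    (hb : ∀ f ∈ G, ∀ y, |f y| ≤ c) (σ : Fin n → Bool) :
    BddAbove ((fun f : X → ℝ => ∑ j, eps (σ j) * |f (x j)|) '' G) :=
  bdd_of_le (c := n * c) fun f hf => by
    calc ∑ j, eps (σ j) * |f (x j)| ≤ ∑ _j : Fin n, c :=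
          Finset.sum_le_sum fun j _ => (eps_mul_le_abs _ _).trans
            (by rw [abs_abs]; exact hb f hf (x j))
      _ = n * c := by simp [Finset.sum_const, nsmul_eq_mul]

theorem empRad_max_le' {X : Type*} (n : ℕ) (hn : 0 < n) (x : Fin n → X)
    (F₁ F₂ : Set (X → ℝ)) (hne₁ : F₁.Nonempty) (hne₂ : F₂.Nonempty)
    (hb₁ : ∀ f ∈ F₁, ∀ y, |f y| ≤ 1) (hb₂ : ∀ f ∈ F₂, ∀ y, |f y| ≤ 1)
    (hneg₁ : ∀ f ∈ F₁, (fun y => -f y) ∈ F₁)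
    (hneg₂ : ∀ f ∈ F₂, (fun y => -f y) ∈ F₂) :
    (1 / (n:ℝ)) * ((1 / 2 ^ n) * ∑ σ : Fin n → Bool,
      sSup ((fun f : X → ℝ => ∑ j, eps (σ j) * f (x j)) ''
        {g | ∃ f₁ ∈ F₁, ∃ f₂ ∈ F₂, g = fun y => max (f₁ y) (f₂ y)})) ≤
    (1 / (n:ℝ)) * ((1 / 2 ^ n) * ∑ σ : Fin n → Bool,
      sSup ((fun f : X → ℝ => ∑ j, eps (σ j) * f (x j)) '' F₁)) +
    (1 / (n:ℝ)) * ((1 / 2 ^ n) * ∑ σ : Fin n → Bool,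
      sSup ((fun f : X → ℝ => ∑ j, eps (σ j) * f (x j)) '' F₂)) := by
  obtain ⟨f₁₀, hf₁₀⟩ := hne₁
  obtain ⟨f₂₀, hf₂₀⟩ := hne₂
  set M : Set (X → ℝ) := {g | ∃ f₁ ∈ F₁, ∃ f₂ ∈ F₂, g = fun y => max (f₁ y) (f₂ y)} with hM
  set H : Set (X → ℝ) := {h | ∃ f₁ ∈ F₁, ∃ f₂ ∈ F₂, h = fun y => f₁ y - f₂ y} with hH
  have hneM : M.Nonempty := ⟨_, f₁₀, hf₁₀, f₂₀, hf₂₀, rfl⟩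
  have hneH : H.Nonempty := ⟨_, f₁₀, hf₁₀, f₂₀, hf₂₀, rfl⟩
  have hbH : ∀ h ∈ H, ∀ y, |h y| ≤ 2 := by
    rintro h ⟨f₁, hf₁, f₂, hf₂, rfl⟩ y
    calc |f₁ y - f₂ y| ≤ |f₁ y| + |f₂ y| := abs_sub _ _
      _ ≤ 2 := by linarith [hb₁ f₁ hf₁ y, hb₂ f₂ hf₂ y]
  set S : Set (X → ℝ) → (Fin n → Bool) → ℝ := fun G σ =>
    sSup ((fun f : X → ℝ => ∑ j, eps (σ j) * f (x j)) '' G) with hS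
  set SA : (Fin n → Bool) → ℝ := fun σ =>
    sSup ((fun h : X → ℝ => ∑ j, eps (σ j) * |h (x j)|) '' H) with hSA
  have hmax : ∀ a b : ℝ, max a b = (a + b) / 2 + |a - b| / 2 := by
    intro a b
    rcases le_total a b with h | h
    · rw [max_eq_right h, abs_of_nonpos (by linarith)]; ring
    · rw [max_eq_left h, abs_of_nonneg (by linarith)]; ring
  -- per-σ inequality (1)
  have step1 : ∀ σ : Fin n → Bool,
      S M σ ≤ (1/2) * S F₁ σ + (1/2) * S F₂ σ + (1/2) * SA σ := by
    intro σ
    apply csSup_le (hneM.image _)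
    rintro y ⟨g, ⟨f₁, hf₁, f₂, hf₂, rfl⟩, rfl⟩
    have hsum : ∑ j, eps (σ j) * max (f₁ (x j)) (f₂ (x j)) =
        (1/2) * (∑ j, eps (σ j) * f₁ (x j)) + (1/2) * (∑ j, eps (σ j) * f₂ (x j)) +
        (1/2) * (∑ j, eps (σ j) * |f₁ (x j) - f₂ (x j)|) := by
      rw [Finset.mul_sum, Finset.mul_sum, Finset.mul_sum, ← Finset.sum_add_distrib,
        ← Finset.sum_add_distrib]
      exact Finset.sum_congr rfl fun j _ => by rw [hmax]; ring
    have m1 : (∑ j, eps (σ j) * f₁ (x j)) ≤ S F₁ σ :=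
      le_csSup (bdd_sum x F₁ 1 hb₁ σ) ⟨f₁, hf₁, rfl⟩
    have m2 : (∑ j, eps (σ j) * f₂ (x j)) ≤ S F₂ σ :=
      le_csSup (bdd_sum x F₂ 1 hb₂ σ) ⟨f₂, hf₂, rfl⟩
    have m3 : (∑ j, eps (σ j) * |f₁ (x j) - f₂ (x j)|) ≤ SA σ :=
      le_csSup (bdd_sum_abs x H 2 hbH σ) ⟨fun y => f₁ y - f₂ y, ⟨f₁, hf₁, f₂, hf₂, rfl⟩, rfl⟩
    show (fun f : X → ℝ => ∑ j, eps (σ j) * f (x j)) (fun y => max (f₁ y) (f₂ y)) ≤ _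
    simp only
    rw [hsum]
    linarith
  -- per-σ inequality (2)
  have step2 : ∀ σ : Fin n → Bool, S H σ ≤ S F₁ σ + S F₂ σ := by
    intro σ
    apply csSup_le (hneH.image _)
    rintro y ⟨h, ⟨f₁, hf₁, f₂, hf₂, rfl⟩, rfl⟩
    have m1 : (∑ j, eps (σ j) * f₁ (x j)) ≤ S F₁ σ :=
      le_csSup (bdd_sum x F₁ 1 hb₁ σ) ⟨f₁, hf₁, rfl⟩
    have m2 : (∑ j, eps (σ j) * (-(f₂ (x j)))) ≤ S F₂ σ :=
      le_csSup (bdd_sum x F₂ 1 hb₂ σ) ⟨fun y => -f₂ y, hneg₂ f₂ hf₂, rfl⟩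
    have hsum : ∑ j, eps (σ j) * (f₁ (x j) - f₂ (x j)) =
        (∑ j, eps (σ j) * f₁ (x j)) + (∑ j, eps (σ j) * (-(f₂ (x j)))) := by
      rw [← Finset.sum_add_distrib]
      exact Finset.sum_congr rfl fun j _ => by ring
    show (fun f : X → ℝ => ∑ j, eps (σ j) * f (x j)) (fun y => f₁ y - f₂ y) ≤ _
    simp only
    rw [hsum]
    linarith
  -- sum over σ
  have hcontr : (∑ σ : Fin n → Bool, SA σ) ≤ ∑ σ : Fin n → Bool, S H σ :=
    contraction x H hneH hbH
  have hsum1 : (∑ σ : Fin n → Bool, S M σ) ≤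
      (1/2) * (∑ σ : Fin n → Bool, S F₁ σ) + (1/2) * (∑ σ : Fin n → Bool, S F₂ σ) +
      (1/2) * (∑ σ : Fin n → Bool, SA σ) := by
    calc (∑ σ : Fin n → Bool, S M σ)
        ≤ ∑ σ : Fin n → Bool, ((1/2) * S F₁ σ + (1/2) * S F₂ σ + (1/2) * SA σ) :=
          Finset.sum_le_sum fun σ _ => step1 σ
      _ = _ := by
          rw [Finset.sum_add_distrib, Finset.sum_add_distrib, ← Finset.mul_sum,
            ← Finset.mul_sum, ← Finset.mul_sum]
  have hsum2 : (∑ σ : Fin n → Bool, S H σ) ≤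
      (∑ σ : Fin n → Bool, S F₁ σ) + (∑ σ : Fin n → Bool, S F₂ σ) := by
    calc (∑ σ : Fin n → Bool, S H σ)
        ≤ ∑ σ : Fin n → Bool, (S F₁ σ + S F₂ σ) := Finset.sum_le_sum fun σ _ => step2 σ
      _ = _ := Finset.sum_add_distrib
  have hfinal : (∑ σ : Fin n → Bool, S M σ) ≤
      (∑ σ : Fin n → Bool, S F₁ σ) + (∑ σ : Fin n → Bool, S F₂ σ) := by linarith
  have hc : (0:ℝ) ≤ (1 / (n:ℝ)) * (1 / 2 ^ n) := by positivity
  have expand : ∀ t : ℝ, (1 / (n:ℝ)) * ((1 / 2 ^ n) * t) =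
      ((1 / (n:ℝ)) * (1 / 2 ^ n)) * t := fun t => by ring
  rw [expand, expand, expand, ← mul_add]
  exact mul_le_mul_of_nonneg_left hfinal hc

/-- Rademacher complexity of the pointwise maximum: for nonempty classes
`F₁, F₂` of functions bounded by 1 and closed under negation,
`R̂(max(F₁,F₂)|_S) ≤ R̂(F₁|_S) + R̂(F₂|_S)`, where
`max(F₁,F₂) = {x ↦ max (f₁ x) (f₂ x) : f₁ ∈ F₁, f₂ ∈ F₂}`. -/
theorem empRad_max_le {X : Type*} (n : ℕ) (hn : 0 < n) (x : Fin n → X)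
    (F₁ F₂ : Set (X → ℝ)) (hne₁ : F₁.Nonempty) (hne₂ : F₂.Nonempty)
    (hb₁ : ∀ f ∈ F₁, ∀ y, |f y| ≤ 1) (hb₂ : ∀ f ∈ F₂, ∀ y, |f y| ≤ 1)
    (hneg₁ : ∀ f ∈ F₁, (fun y => -f y) ∈ F₁)
    (hneg₂ : ∀ f ∈ F₂, (fun y => -f y) ∈ F₂) :
    empRad n x {g | ∃ f₁ ∈ F₁, ∃ f₂ ∈ F₂, g = fun y => max (f₁ y) (f₂ y)} ≤
      empRad n x F₁ + empRad n x F₂ := by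
  exact empRad_max_le' n hn x F₁ F₂ hne₁ hne₂ hb₁ hb₂ hneg₁ hneg₂
end

section
/- Quadratic network solutions on the source are indexed by a coordinate: let f(x) = xᵀ A x for a symmetric matrix A ∈ ℝ^{d×d}. Suppose f(x) = x₁² − x₂² holds for all x in the set S = {x ∈ {−1,0,1}^d : x₃,…,x_d ∈ {±x₂}} (i.e., x_k = σ_k x₂ for signs σ_k, for all sign patterns and all values x₁, x₂ ∈ {−1,0,1}). Then A is diagonal with A₁₁ = 1 and Σ_{i=2}^d Aᵢᵢ = −1. -/
open Finset

/-- Quadratic network solutions on the source are indexed by a coordinate: if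
the quadratic form `x ↦ xᵀ A x` of a symmetric matrix `A` agrees with
`x₁² − x₂²` on all points of the structured source support (coordinates in
`{−1,0,1}` with coordinates `3,…,d` equal to `±x₂`), then `A` is diagonal with
`A₁₁ = 1` and `Σ_{i=2}^d Aᵢᵢ = −1`. -/
theorem quadratic_source_solutions {d : ℕ} (hd : 2 ≤ d)
    (A : Matrix (Fin d) (Fin d) ℝ) (hsymm : A.IsSymm)
    (hfit : ∀ x : Fin d → ℝ,
      (∀ i, x i = -1 ∨ x i = 0 ∨ x i = 1) →
      (∀ k : Fin d, 2 ≤ (k : ℕ) →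
        x k = x ⟨1, by omega⟩ ∨ x k = -(x ⟨1, by omega⟩)) →
      dotProduct x (A.mulVec x) =
        (x ⟨0, by omega⟩) ^ 2 - (x ⟨1, by omega⟩) ^ 2) :
    (∀ j k, j ≠ k → A j k = 0) ∧
      A ⟨0, by omega⟩ ⟨0, by omega⟩ = 1 ∧
      ∑ i ∈ univ.erase (⟨0, by omega⟩ : Fin d), A i i = -1 := by
  have h0d : (0:ℕ) < d := by omega
  have h1d : (1:ℕ) < d := by omega
  have i0 : Fin d := ⟨0, h0d⟩
  -- symmetry of the associated bilinear form
  have hB : ∀ x y : Fin d → ℝ, dotProduct x (A.mulVec y)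
      = dotProduct y (A.mulVec x) := by
    intro x y
    rw [Matrix.dotProduct_mulVec, ← Matrix.mulVec_transpose, hsymm.eq,
      dotProduct_comm]
  -- quadratic form vanishes on all sign vectors
  have hsign : ∀ x : Fin d → ℝ, (∀ i, x i = -1 ∨ x i = 1) →
      dotProduct x (A.mulVec x) = 0 := by
    intro x hx
    have h := hfit x (fun i => by rcases hx i with h | h <;> simp [h])
      (fun k _ => by
        rcases hx k with h | h <;> rcases hx ⟨1, by omega⟩ with h1 | h1 <;>
          simp [h, h1])
    rw [h]
    rcases hx ⟨0, by omega⟩ with h | h <;> rcases hx ⟨1, by omega⟩ with h1 | h1 <;>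
      rw [h, h1] <;> ring
  -- expansion of q(u - v)
  have expand : ∀ u v : Fin d → ℝ,
      dotProduct (u - v) (A.mulVec (u - v))
        = dotProduct u (A.mulVec u)
          - 2 * dotProduct u (A.mulVec v)
          + dotProduct v (A.mulVec v) := by
    intro u v
    rw [Matrix.mulVec_sub, dotProduct_sub, sub_dotProduct,
      sub_dotProduct, hB v u]
    ring
  set one : Fin d → ℝ := (fun _ => 1) with hone
  -- off-diagonal entries vanish
  have hoff : ∀ j k : Fin d, j ≠ k → A j k = 0 := by
    intro j k hjk
    set sj : Fin d → ℝ := Pi.single j (2:ℝ) with hsj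
    set sk : Fin d → ℝ := Pi.single k (2:ℝ) with hsk
    have hq1 : dotProduct one (A.mulVec one) = 0 :=
      hsign _ (fun i => Or.inr rfl)
    have hvj : ∀ i : Fin d, (one - sj) i = -1 ∨ (one - sj) i = 1 := by
      intro i
      by_cases h : i = j <;> simp [hone, hsj, Pi.single_apply, h] <;> norm_num
    have hvk : ∀ i : Fin d, (one - sk) i = -1 ∨ (one - sk) i = 1 := by
      intro i
      by_cases h : i = k <;> simp [hone, hsk, Pi.single_apply, h] <;> norm_num
    have hvjk : ∀ i : Fin d, ((one - sj) - sk) i = -1 ∨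
        ((one - sj) - sk) i = 1 := by
      intro i
      by_cases h : i = j <;> by_cases h' : i = k <;>
        simp [hone, hsj, hsk, Pi.single_apply, Pi.sub_apply, h, h', hjk] <;>
        norm_num
    have hqj := hsign _ hvj
    have hqk := hsign _ hvk
    have hqjk := hsign _ hvjk
    rw [expand] at hqj hqk
    rw [expand, expand, sub_dotProduct] at hqjk
    have hAjk : dotProduct sj (A.mulVec sk) = 4 * A j k := by
      simp [hsj, hsk, Matrix.mulVec_single, single_dotProduct]
      ring
    rw [hq1] at hqj hqk hqjk
    rw [hAjk] at hqjk
    linarith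
  refine ⟨hoff, ?_, ?_⟩
  · -- A₀₀ = 1
    have h := hfit (Pi.single ⟨0, by omega⟩ (1:ℝ))
      (fun i => by
        by_cases h : i = (⟨0, by omega⟩ : Fin d) <;> simp [Pi.single_apply, h])
      (fun k hk => by
        have hk0 : k ≠ (⟨0, by omega⟩ : Fin d) := by
          intro h; rw [h] at hk; simp at hk
        have h10 : (⟨1, by omega⟩ : Fin d) ≠ (⟨0, by omega⟩ : Fin d) := by
          intro h; simp [Fin.ext_iff] at h
        left
        simp [Pi.single_apply, hk0, h10])
    have h10 : (⟨1, by omega⟩ : Fin d) ≠ (⟨0, by omega⟩ : Fin d) := by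
      intro h; simp [Fin.ext_iff] at h
    rw [single_dotProduct, Matrix.mulVec_single] at h
    simpa [Pi.single_apply, h10] using h
  · -- diagonal sum
    have hA00 : A ⟨0, by omega⟩ ⟨0, by omega⟩ = 1 := by
      have h := hfit (Pi.single ⟨0, by omega⟩ (1:ℝ))
        (fun i => by
          by_cases h : i = (⟨0, by omega⟩ : Fin d) <;> simp [Pi.single_apply, h])
        (fun k hk => by
          have hk0 : k ≠ (⟨0, by omega⟩ : Fin d) := by
            intro h; rw [h] at hk; simp at hk
          have h10 : (⟨1, by omega⟩ : Fin d) ≠ (⟨0, by omega⟩ : Fin d) := by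
            intro h; simp [Fin.ext_iff] at h
          left
          simp [Pi.single_apply, hk0, h10])
      have h10 : (⟨1, by omega⟩ : Fin d) ≠ (⟨0, by omega⟩ : Fin d) := by
        intro h; simp [Fin.ext_iff] at h
      rw [single_dotProduct, Matrix.mulVec_single] at h
      simpa [Pi.single_apply, h10] using h
    have hq1 : dotProduct one (A.mulVec one) = 0 :=
      hsign _ (fun i => Or.inr rfl)
    have hsum : dotProduct one (A.mulVec one)
        = ∑ a : Fin d, A a a := by
      simp only [hone, dotProduct, Matrix.mulVec, mul_one, one_mul]
      refine Finset.sum_congr rfl fun a _ => ?_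
      rw [Finset.sum_eq_single a (fun b _ hb => hoff a b (Ne.symm hb)) (by simp)]
    have htot : ∑ a : Fin d, A a a = 0 := by rw [← hsum, hq1]
    have hsplit : ∑ a : Fin d, A a a
        = A ⟨0, by omega⟩ ⟨0, by omega⟩ + ∑ i ∈ univ.erase (⟨0, by omega⟩ : Fin d), A i i :=
      (Finset.add_sum_erase Finset.univ (fun a => A a a)
        (Finset.mem_univ (⟨0, by omega⟩ : Fin d))).symm
    rw [hsplit, hA00] at htot
    linarith
end
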